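/- A function f : [n] → [m] is quasi-monotonic if and only if it factors as f = d_α ∘ u_β for some multi-index β of dimension ≤ n with |β| = n − j and some multi-index α of dimension ≤ m with |α| = m − j, where u_β : [n] → [j] and d_α : [j] → [m] for some 0 ≤ j ≤ min(n, m). -/

import Mathlib

/-- The elementary coface `d_i^{(n+1)} : [n] → [n+1]` (monotonic injection omitting `i`):
`k ↦ k` for `k < i` and `k ↦ k+1` for `k ≥ i`. -/
def dMap (n i : ℕ) : Fin (n + 1) → Fin (n + 2) :=
  fun k => if (k : ℕ) < i then ⟨k, by omega⟩ else ⟨(k : ℕ) + 1, by omega⟩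

/-- The elementary quasi-codegeneracy `u_i^{(n)} : [n+1] → [n]`:
`u_i 0 = u_i i = 0`, `u_i k = k` for `1 ≤ k ≤ i-1`, and `u_i k = k-1` for `k > i`. -/
def uMap (n i : ℕ) : Fin (n + 2) → Fin (n + 1) :=
  fun k => if (k : ℕ) = 0 ∨ (k : ℕ) = i then 0
    else if h : (k : ℕ) < i ∧ (k : ℕ) < n + 1 then ⟨k, h.2⟩
    else ⟨(k : ℕ) - 1, by omega⟩

/-- A function `f : [n] → [m]` is quasi-monotonic if `f 0 = 0` and `f` is strictly
monotonic outside the preimage of `0`. -/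
def QuasiMonotonic {n m : ℕ} (f : Fin (n + 1) → Fin (m + 1)) : Prop :=
  f 0 = 0 ∧ ∀ p q : Fin (n + 1), p < q → f p ≠ 0 → f q ≠ 0 → f p < f q

/-- A multi-index of dimension `≤ n`: a strictly increasing sequence of indices
`i_1 < … < i_k` with `1 ≤ i_p ≤ n` for all `p` (its length is `α.length`). -/
def IsMultiIndex (n : ℕ) (α : List ℕ) : Prop :=
  List.Chain' (· < ·) α ∧ ∀ i ∈ α, 1 ≤ i ∧ i ≤ n

/-- The quasi-codegeneracy `u_α = u_{i_1} ∘ u_{i_2} ∘ ⋯ ∘ u_{i_k} : [n] → [n-k]`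
associated to a multi-index `α = (i_1, …, i_k)`; each elementary factor is taken at the
appropriate dimension (`u_{i_k}` is applied first, at the highest dimension). -/
def uComp (n : ℕ) : (α : List ℕ) → α.length ≤ n → Fin (n + 1) → Fin (n - α.length + 1)
  | [], _ => fun k => k
  | i :: rest, h => fun k =>
      Fin.cast (by simp only [List.length_cons] at h ⊢; omega)
        (uMap (n - rest.length - 1) i
          (Fin.cast (by simp only [List.length_cons] at h; omega)
            (uComp n rest (by simp only [List.length_cons] at h; omega) k)))

/-- The coface `d_α = d_{i_k} ∘ d_{i_{k-1}} ∘ ⋯ ∘ d_{i_1} : [n-k] → [n]`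
associated to a multi-index `α = (i_1, …, i_k)`; each elementary factor is taken at the
appropriate dimension (`d_{i_1}` is applied first, at the lowest dimension). -/
def dComp (n : ℕ) : (α : List ℕ) → α.length ≤ n → Fin (n - α.length + 1) → Fin (n + 1)
  | [], _ => fun k => k
  | i :: rest, h => fun k =>
      dComp n rest (by simp only [List.length_cons] at h; omega)
        (Fin.cast (by simp only [List.length_cons] at h; omega)
          (dMap (n - rest.length - 1) i
            (Fin.cast (by simp only [List.length_cons] at h ⊢; omega) k)))


lemma countP_split (l : List ℕ) (q p1 p2 : ℕ → Bool)
    (h : ∀ a ∈ l, q a = true → p1 a = true ∨ p2 a = true) :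
    l.countP q ≤ l.countP p1 + l.countP p2 := by
  induction l with
  | nil => simp
  | cons a t ih =>
    simp only [List.countP_cons]
    have ha := h a (by simp)
    have ht := ih (fun x hx hq => h x (by simp [hx]) hq)
    rcases Bool.eq_false_or_eq_true (p1 a) with h1|h1 <;>
      rcases Bool.eq_false_or_eq_true (p2 a) with h2|h2 <;>
      rcases Bool.eq_false_or_eq_true (q a) with h3|h3 <;>
      simp only [h1, h2, h3, if_true, if_false, Bool.false_eq_true] <;>
      first | omega | exact absurd (ha h3) (by simp [h1, h2])

lemma countP_mono_pred (l : List ℕ) (p q : ℕ → Bool) (h : ∀ a ∈ l, p a = true → q a = true) :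
    l.countP p ≤ l.countP q := by
  induction l with
  | nil => simp
  | cons a t ih =>
    simp only [List.countP_cons]
    have ha := h a (by simp)
    have ht := ih (fun x hx hp => h x (by simp [hx]) hp)
    rcases Bool.eq_false_or_eq_true (p a) with hp|hp <;>
      rcases Bool.eq_false_or_eq_true (q a) with hq|hq <;>
      simp only [hp, hq, if_true, if_false, Bool.false_eq_true] <;>
      first | omega | exact absurd (ha hp) (by simp [hq])

lemma pairwise_window (l : List ℕ) (hc : l.Pairwise (· < ·)) (a b : ℕ)
    (h : ∀ x ∈ l, a < x ∧ x < b) : l.length ≤ b - a - 1 := by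
  induction l generalizing a with
  | nil => simp
  | cons x t ih =>
    rw [List.pairwise_cons] at hc
    have hx := h x (by simp)
    have := ih hc.2 x (fun y hy => ⟨hc.1 y hy, (h y (by simp [hy])).2⟩)
    simp only [List.length_cons]
    omega

lemma pairwise_length_le (l : List ℕ) (hc : l.Pairwise (· < ·)) (n : ℕ)
    (h : ∀ x ∈ l, 1 ≤ x ∧ x ≤ n) : l.length ≤ n := by
  have := pairwise_window l hc 0 (n+1) (fun x hx => ⟨(h x hx).1, by have := (h x hx).2; omega⟩)
  omega

lemma head_bound (i : ℕ) (rest : List ℕ) (hc : (i :: rest).Pairwise (· < ·)) (n : ℕ)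
    (h : ∀ x ∈ i :: rest, 1 ≤ x ∧ x ≤ n) : i + rest.length ≤ n := by
  rw [List.pairwise_cons] at hc
  have := pairwise_window rest hc.2 i (n+1)
    (fun y hy => ⟨hc.1 y hy, by have := (h y (by simp [hy])).2; omega⟩)
  have hi := h i (by simp)
  omega

lemma uMap_val (n i : ℕ) (hi : i ≤ n + 1) (k : Fin (n+2)) :
    ((uMap n i k : Fin (n+1)) : ℕ) =
      if (k : ℕ) = 0 ∨ (k : ℕ) = i then 0 else if (k : ℕ) < i then (k : ℕ) else (k : ℕ) - 1 := by
  unfold uMap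
  split_ifs with h1 h2 h3 h4 <;> try rfl
  · exact absurd h2.1 h3
  · exact absurd ⟨h4, by omega⟩ h2

lemma dMap_val (n i : ℕ) (k : Fin (n+1)) :
    ((dMap n i k : Fin (n+2)) : ℕ) = if (k : ℕ) < i then (k : ℕ) else (k : ℕ) + 1 := by
  unfold dMap; split <;> simp

lemma uComp_val (n : ℕ) (β : List ℕ) (hp : β.Pairwise (· < ·))
    (hb : ∀ a ∈ β, 1 ≤ a ∧ a ≤ n) (x : Fin (n+1)) (hl : β.length ≤ n) :
    ((uComp n β hl x) : ℕ) =
      if (x : ℕ) = 0 ∨ (x : ℕ) ∈ β then 0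
      else (x : ℕ) - β.countP (fun a => decide (a < (x : ℕ))) := by
  induction β with
  | nil =>
    simp only [uComp, List.countP_nil, List.not_mem_nil, or_false, Nat.sub_zero]
    split <;> omega
  | cons i rest ih =>
    have hbr : ∀ a ∈ rest, 1 ≤ a ∧ a ≤ n := fun a ha => hb a (List.mem_cons_of_mem _ ha)
    have hpc := List.pairwise_cons.mp hp
    have hi : i + rest.length ≤ n := head_bound i rest hp n hb
    have hi1 : 1 ≤ i := (hb i (by simp)).1
    have hih := ih hpc.2 hbr
    simp only [uComp, Fin.coe_cast]
    rw [uMap_val _ _ (by omega)]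
    simp only [Fin.coe_cast]
    rw [hih]
    by_cases h0 : (x:ℕ) = 0 ∨ (x:ℕ) ∈ rest
    · rw [if_pos h0]
      have hm : (x:ℕ) = 0 ∨ (x:ℕ) ∈ i :: rest := by
        rcases h0 with h|h
        · exact Or.inl h
        · exact Or.inr (List.mem_cons_of_mem _ h)
      rw [if_pos hm, if_pos (Or.inl rfl)]
    · rw [if_neg h0]
      have hxne : (x:ℕ) ≠ 0 := fun h => h0 (Or.inl h)
      have hxnr : (x:ℕ) ∉ rest := fun h => h0 (Or.inr h)
      simp only [List.countP_cons, decide_eq_true_eq]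
      by_cases hxi : (x:ℕ) = i
      · have hc0 : rest.countP (fun a => decide (a < (x:ℕ))) = 0 := by
          rw [List.countP_eq_zero]
          intro a ha
          simp only [decide_eq_true_eq, not_lt]
          have := hpc.1 a ha; omega
        rw [hc0, if_pos (by omega : (x:ℕ) - 0 = 0 ∨ (x:ℕ) - 0 = i),
          if_pos (by simp [hxi] : (x:ℕ) = 0 ∨ (x:ℕ) ∈ i :: rest)]
      · have hxm : ¬ ((x:ℕ) = 0 ∨ (x:ℕ) ∈ i :: rest) := by
          simp only [List.mem_cons]
          push_neg
          exact ⟨hxne, hxi, hxnr⟩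
        rw [if_neg hxm]
        by_cases hxlt : (x:ℕ) < i
        · have hc0 : rest.countP (fun a => decide (a < (x:ℕ))) = 0 := by
            rw [List.countP_eq_zero]
            intro a ha
            simp only [decide_eq_true_eq, not_lt]
            have := hpc.1 a ha; omega
          rw [hc0, if_neg (by omega : ¬((x:ℕ) - 0 = 0 ∨ (x:ℕ) - 0 = i)),
            if_pos (by omega : (x:ℕ) - 0 < i), if_neg (by omega : ¬ i < (x:ℕ))]
        · have hw : rest.countP (fun a => decide (a < (x:ℕ))) ≤ (x:ℕ) - i - 1 := by
            rw [List.countP_eq_length_filter]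
            apply pairwise_window _ (hpc.2.filter _) i (x:ℕ)
            intro a ha
            have hmem := List.mem_filter.mp ha
            exact ⟨hpc.1 a hmem.1, by simpa using hmem.2⟩
          rw [if_neg (by omega : ¬((x:ℕ) - rest.countP (fun a => decide (a < (x:ℕ))) = 0 ∨
              (x:ℕ) - rest.countP (fun a => decide (a < (x:ℕ))) = i)),
            if_neg (by omega : ¬ (x:ℕ) - rest.countP (fun a => decide (a < (x:ℕ))) < i),
            if_pos (by omega : i < (x:ℕ))]
          omega

lemma dComp_val (m : ℕ) (α : List ℕ) (hp : α.Pairwise (· < ·))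
    (hb : ∀ a ∈ α, 1 ≤ a ∧ a ≤ m) (y : ℕ) (hy : y ≤ m) (hyα : y ∉ α)
    (hl : α.length ≤ m) (k : Fin (m - α.length + 1))
    (hk : (k : ℕ) = y - α.countP (fun a => decide (a < y))) :
    ((dComp m α hl k) : ℕ) = y := by
  induction α with
  | nil =>
    simp only [List.countP_nil, Nat.sub_zero] at hk
    simpa [dComp] using hk
  | cons i rest ih =>
    have hbr : ∀ a ∈ rest, 1 ≤ a ∧ a ≤ m := fun a ha => hb a (List.mem_cons_of_mem _ ha)
    have hpc := List.pairwise_cons.mp hp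
    have hi : i + rest.length ≤ m := head_bound i rest hp m hb
    have hi1 : 1 ≤ i := (hb i (by simp)).1
    have hyr : y ∉ rest := fun h => hyα (List.mem_cons_of_mem _ h)
    have hyi : y ≠ i := fun h => hyα (by simp [h])
    simp only [dComp]
    apply ih hpc.2 hbr hyr
    simp only [Fin.coe_cast]
    rw [dMap_val]
    simp only [Fin.coe_cast]
    simp only [List.countP_cons, decide_eq_true_eq] at hk
    by_cases hylt : y < i
    · have hc0 : rest.countP (fun a => decide (a < y)) = 0 := by
        rw [List.countP_eq_zero]
        intro a ha
        simp only [decide_eq_true_eq, not_lt]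
        have := hpc.1 a ha; omega
      rw [hc0] at hk ⊢
      rw [if_neg (by omega : ¬ i < y)] at hk
      rw [if_pos (by omega : (k:ℕ) < i)]
      omega
    · have hw : rest.countP (fun a => decide (a < y)) ≤ y - i - 1 := by
        rw [List.countP_eq_length_filter]
        apply pairwise_window _ (hpc.2.filter _) i y
        intro a ha
        have hmem := List.mem_filter.mp ha
        exact ⟨hpc.1 a hmem.1, by simpa using hmem.2⟩
      rw [if_pos (by omega : i < y)] at hk
      rw [if_neg (by omega : ¬ (k:ℕ) < i)]
      omega

lemma quasiMonotonic_comp {n m k : ℕ} {f : Fin (n+1) → Fin (m+1)} {g : Fin (m+1) → Fin (k+1)}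
    (hg : QuasiMonotonic g) (hf : QuasiMonotonic f) : QuasiMonotonic (fun x => g (f x)) := by
  refine ⟨by show g (f 0) = 0; rw [hf.1, hg.1], fun p q hpq hp hq => ?_⟩
  have hfp : f p ≠ 0 := fun h => hp (by simp only [h]; exact hg.1)
  have hfq : f q ≠ 0 := fun h => hq (by simp only [h]; exact hg.1)
  exact hg.2 _ _ (hf.2 p q hpq hfp hfq) hp hq

lemma dComp_strictMono (m : ℕ) (α : List ℕ) (hl : α.length ≤ m) :
    ∀ a b : Fin (m - α.length + 1), a < b → dComp m α hl a < dComp m α hl b := by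
  induction α with
  | nil => intro a b h; simpa [dComp] using h
  | cons i rest ih =>
    intro a b h
    simp only [dComp]
    apply ih
    rw [Fin.lt_def] at h ⊢
    simp only [Fin.coe_cast]
    rw [dMap_val, dMap_val]
    simp only [Fin.coe_cast]
    split_ifs <;> omega

lemma uComp_quasiMonotonic (n : ℕ) (β : List ℕ) (hp : β.Pairwise (· < ·))
    (hb : ∀ a ∈ β, 1 ≤ a ∧ a ≤ n) (hl : β.length ≤ n) :
    QuasiMonotonic (uComp n β hl) := by
  constructor
  · apply Fin.ext
    rw [uComp_val n β hp hb _ hl]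
    simp
  · intro p q hpq hp0 hq0
    have hvp : ((uComp n β hl p) : ℕ) ≠ 0 := fun h => hp0 (Fin.ext (by simpa using h))
    have hvq : ((uComp n β hl q) : ℕ) ≠ 0 := fun h => hq0 (Fin.ext (by simpa using h))
    rw [uComp_val n β hp hb _ hl] at hvp hvq
    have hcp : ¬ ((p:ℕ) = 0 ∨ (p:ℕ) ∈ β) := fun h => hvp (by rw [if_pos h])
    have hcq : ¬ ((q:ℕ) = 0 ∨ (q:ℕ) ∈ β) := fun h => hvq (by rw [if_pos h])
    rw [if_neg hcp] at hvp
    rw [if_neg hcq] at hvq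
    rw [Fin.lt_def] at hpq ⊢
    rw [uComp_val n β hp hb p hl, uComp_val n β hp hb q hl, if_neg hcp, if_neg hcq]
    have hpnm : (p:ℕ) ∉ β := fun h => hcp (Or.inr h)
    have hsplit : β.countP (fun a => decide (a < (q:ℕ))) ≤
        β.countP (fun a => decide (a < (p:ℕ))) +
        β.countP (fun a => decide ((p:ℕ) < a ∧ a < (q:ℕ))) := by
      apply countP_split
      intro a ha hq'
      simp only [decide_eq_true_eq] at hq' ⊢
      have : a ≠ (p:ℕ) := fun h => hpnm (h ▸ ha)
      omega
    have hwin : β.countP (fun a => decide ((p:ℕ) < a ∧ a < (q:ℕ))) ≤ (q:ℕ) - (p:ℕ) - 1 := by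
      rw [List.countP_eq_length_filter]
      apply pairwise_window _ (hp.filter _) (p:ℕ) (q:ℕ)
      intro a ha
      have hmem := List.mem_filter.mp ha
      simpa using hmem.2
    omega

lemma dComp_zero (m : ℕ) (α : List ℕ) (hp : α.Pairwise (· < ·))
    (hb : ∀ a ∈ α, 1 ≤ a ∧ a ≤ m) (hl : α.length ≤ m)
    (k : Fin (m - α.length + 1)) (hk : (k : ℕ) = 0) :
    dComp m α hl k = 0 := by
  apply Fin.ext
  have h0 : (0:ℕ) ∉ α := fun h => by have := (hb 0 h).1; omega
  have := dComp_val m α hp hb 0 (by omega) h0 hl k (by simpa using hk)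
  simpa using this

lemma countP_finRange {k : ℕ} (p : Fin k → Bool) :
    (List.finRange k).countP p = ((Finset.univ : Finset (Fin k)).filter (fun x => p x = true)).card := by
  rw [Fin.univ_def]
  simp only [Finset.filter, Finset.card, Multiset.filter_coe, Multiset.coe_card]
  rw [List.countP_eq_length_filter]
  congr 1
  apply List.filter_congr
  intro a _
  simp

lemma countP_finRange' {k : ℕ} (P : Fin k → Prop) [DecidablePred P] :
    (List.finRange k).countP (fun x => decide (P x)) = (Finset.univ.filter P).card := by
  rw [countP_finRange]
  congr 1
  apply Finset.filter_congr
  intro x _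
  simp

lemma countP_map_filter {k : ℕ} (P : Fin k → Prop) [DecidablePred P] (Q : ℕ → Prop) [DecidablePred Q] :
    (((List.finRange k).filter (fun x => decide (P x))).map Fin.val).countP (fun a => decide (Q a))
      = (Finset.univ.filter (fun x => P x ∧ Q x.val)).card := by
  rw [List.countP_map, List.countP_filter, ← countP_finRange']
  apply List.countP_congr
  intro a _
  simp [Function.comp, and_comm]

lemma length_map_filter {k : ℕ} (P : Fin k → Prop) [DecidablePred P] :
    (((List.finRange k).filter (fun x => decide (P x))).map Fin.val).length
      = (Finset.univ.filter P).card := by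
  rw [List.length_map, ← List.countP_eq_length_filter, countP_finRange']

lemma card_filter_val {k : ℕ} (P : ℕ → Prop) [DecidablePred P] :
    ((Finset.univ : Finset (Fin k)).filter (fun x => P x.val)).card
      = ((Finset.range k).filter P).card := by
  apply Finset.card_nbij (i := Fin.val)
  · intro a ha
    simp only [Finset.mem_coe, Finset.mem_filter, Finset.mem_range, Finset.mem_univ, true_and] at ha ⊢
    exact ⟨a.isLt, ha⟩
  · intro a _ b _ h
    exact Fin.ext h
  · intro b hb
    simp only [Finset.coe_filter, Set.mem_setOf_eq, Finset.mem_range, Finset.mem_univ, true_and] at hb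
    exact ⟨⟨b, hb.1⟩, by simp [hb.2], rfl⟩

lemma card_val_le {k t : ℕ} (ht : t ≤ k) :
    ((Finset.univ : Finset (Fin (k+1))).filter (fun x => x.val ≠ 0 ∧ x.val ≤ t)).card = t := by
  rw [card_filter_val (fun v => v ≠ 0 ∧ v ≤ t)]
  have : (Finset.range (k+1)).filter (fun v => v ≠ 0 ∧ v ≤ t) = Finset.Icc 1 t := by
    ext v
    simp only [Finset.mem_filter, Finset.mem_range, Finset.mem_Icc]
    omega
  rw [this, Nat.card_Icc]
  omega

/-- a function `f : [n] → [m]` is quasi-monotonic iff it factors as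
`f = d_α ∘ u_β` with `u_β : [n] → [j]` and `d_α : [j] → [m]` for some
`0 ≤ j ≤ min n m`, where `β` is a multi-index of dimension `≤ n` with `|β| = n - j`
and `α` is a multi-index of dimension `≤ m` with `|α| = m - j`. -/
theorem quasiMonotonic_iff_factorization (n m : ℕ) (f : Fin (n + 1) → Fin (m + 1)) :
    QuasiMonotonic f ↔
      ∃ (j : ℕ) (hjn : j ≤ n) (hjm : j ≤ m) (β α : List ℕ)
        (hβl : β.length ≤ n) (hαl : α.length ≤ m),
        IsMultiIndex n β ∧ IsMultiIndex m α ∧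
          ∃ (hβk : β.length = n - j) (hαk : α.length = m - j),
            ∀ x : Fin (n + 1),
              f x = dComp m α hαl (Fin.cast (by omega) (uComp n β hβl x)) := by
  constructor
  · intro hqm
    -- the multi-indices
    set β : List ℕ :=
      ((List.finRange (n+1)).filter (fun x => decide (x ≠ 0 ∧ f x = 0))).map Fin.val with hβ
    set α : List ℕ :=
      ((List.finRange (m+1)).filter (fun y => decide (y ≠ 0 ∧ ∀ x, f x ≠ y))).map Fin.val with hα
    have hβmem : ∀ b : ℕ, b ∈ β ↔ ∃ x : Fin (n+1), (x:ℕ) = b ∧ x ≠ 0 ∧ f x = 0 := by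
      intro b
      rw [hβ]
      simp only [List.mem_map, List.mem_filter, List.mem_finRange, decide_eq_true_eq, true_and]
      tauto
    have hαmem : ∀ b : ℕ, b ∈ α ↔ ∃ y : Fin (m+1), (y:ℕ) = b ∧ y ≠ 0 ∧ ∀ x, f x ≠ y := by
      intro b
      rw [hα]
      simp only [List.mem_map, List.mem_filter, List.mem_finRange, decide_eq_true_eq, true_and]
      tauto
    have hβpw : β.Pairwise (· < ·) := by
      rw [hβ]
      exact List.pairwise_map.mpr
        (((List.pairwise_lt_finRange (n+1)).sublist List.filter_sublist).imp (fun h => h))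
    have hαpw : α.Pairwise (· < ·) := by
      rw [hα]
      exact List.pairwise_map.mpr
        (((List.pairwise_lt_finRange (m+1)).sublist List.filter_sublist).imp (fun h => h))
    have hβb : ∀ a ∈ β, 1 ≤ a ∧ a ≤ n := by
      intro a ha
      obtain ⟨x, hx, hx0, -⟩ := (hβmem a).mp ha
      have h1 : (x:ℕ) ≠ 0 := fun h => hx0 (Fin.ext h)
      have h2 := x.isLt
      omega
    have hαb : ∀ a ∈ α, 1 ≤ a ∧ a ≤ m := by
      intro a ha
      obtain ⟨y, hy, hy0, -⟩ := (hαmem a).mp ha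
      have h1 : (y:ℕ) ≠ 0 := fun h => hy0 (Fin.ext h)
      have h2 := y.isLt
      omega
    have hβl : β.length ≤ n := pairwise_length_le β hβpw n hβb
    have hαl : α.length ≤ m := pairwise_length_le α hαpw m hαb
    -- cardinalities
    set T : Finset (Fin (n+1)) := Finset.univ.filter (fun x => x ≠ 0 ∧ ¬ f x = 0) with hT
    set S : Finset (Fin (m+1)) := Finset.univ.filter (fun y => y ≠ 0 ∧ ∃ x, f x = y) with hS
    have hβlen : β.length = (Finset.univ.filter (fun x : Fin (n+1) => x ≠ 0 ∧ f x = 0)).card := by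
      rw [hβ]; exact length_map_filter _
    have hαlen : α.length =
        (Finset.univ.filter (fun y : Fin (m+1) => y ≠ 0 ∧ ∀ x, f x ≠ y)).card := by
      rw [hα]; exact length_map_filter _
    have hcardn : (Finset.univ.filter (fun x : Fin (n+1) => x ≠ 0)).card = n := by
      rw [Finset.filter_ne']
      rw [Finset.card_erase_of_mem (Finset.mem_univ _), Finset.card_univ, Fintype.card_fin]
      omega
    have hcardm : (Finset.univ.filter (fun y : Fin (m+1) => y ≠ 0)).card = m := by
      rw [Finset.filter_ne']
      rw [Finset.card_erase_of_mem (Finset.mem_univ _), Finset.card_univ, Fintype.card_fin]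
      omega
    have hsumn : β.length + T.card = n := by
      rw [hβlen, hT]
      have hsplit := Finset.card_filter_add_card_filter_not
        (s := Finset.univ.filter (fun x : Fin (n+1) => x ≠ 0)) (p := fun x => f x = 0)
      rw [Finset.filter_filter, Finset.filter_filter, hcardn] at hsplit
      exact hsplit
    have hsumm : α.length + S.card = m := by
      rw [hαlen, hS]
      have hsplit := Finset.card_filter_add_card_filter_not
        (s := Finset.univ.filter (fun y : Fin (m+1) => y ≠ 0)) (p := fun y => ∀ x, f x ≠ y)
      rw [Finset.filter_filter, Finset.filter_filter, hcardm] at hsplit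
      have heq : Finset.univ.filter (fun y : Fin (m+1) => y ≠ 0 ∧ ¬ ∀ x, f x ≠ y)
          = Finset.univ.filter (fun y : Fin (m+1) => y ≠ 0 ∧ ∃ x, f x = y) := by
        apply Finset.filter_congr
        intro y _
        push_neg
        rfl
      rw [heq] at hsplit
      exact hsplit
    have hinj : ∀ p q : Fin (n+1), f p ≠ 0 → f q ≠ 0 → f p = f q → p = q := by
      intro p q hp hq hpq
      rcases lt_trichotomy p q with h | h | h
      · exact absurd hpq (ne_of_lt (hqm.2 p q h hp hq))
      · exact h
      · exact absurd hpq.symm (ne_of_lt (hqm.2 q p h hq hp))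
    have hTS : T.card = S.card := by
      apply Finset.card_nbij (i := f)
      · intro a ha
        rw [Finset.mem_coe, hT, Finset.mem_filter] at ha
        rw [Finset.mem_coe, hS, Finset.mem_filter]
        exact ⟨Finset.mem_univ _, ha.2.2, a, rfl⟩
      · intro a ha b hb hab
        simp only [hT, Finset.coe_filter, Set.mem_setOf_eq] at ha hb
        exact hinj a b ha.2.2 hb.2.2 hab
      · intro y hy
        simp only [hS, Finset.coe_filter, Set.mem_setOf_eq, Finset.mem_univ, true_and] at hy
        obtain ⟨hy0, x, hx⟩ := hy
        have hx0 : x ≠ 0 := by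
          intro h
          rw [h, hqm.1] at hx
          exact hy0 hx.symm
        refine ⟨x, ?_, hx⟩
        simp only [hT, Finset.coe_filter, Set.mem_setOf_eq, Finset.mem_univ, true_and]
        exact ⟨hx0, by rw [hx]; exact hy0⟩
    refine ⟨T.card, by omega, by omega, β, α, hβl, hαl,
      ⟨List.isChain_iff_pairwise.mpr hβpw, hβb⟩, ⟨List.isChain_iff_pairwise.mpr hαpw, hαb⟩,
      by omega, by omega, ?_⟩
    intro x
    apply Fin.ext
    have hfxle : ((f x : Fin (m+1)) : ℕ) ≤ m := by omega
    have hfxnotmem : ((f x : Fin (m+1)) : ℕ) ∉ α := by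
      intro hmem
      obtain ⟨y, hy, -, hy2⟩ := (hαmem _).mp hmem
      exact hy2 x (Fin.ext hy).symm
    refine (dComp_val m α hαpw hαb ((f x : Fin (m+1)) : ℕ) hfxle hfxnotmem hαl _ ?_).symm
    rw [Fin.coe_cast, uComp_val n β hβpw hβb x hβl]
    by_cases hfx : f x = 0
    · rw [if_pos ?memcase]
      case memcase =>
        by_cases hx0 : x = 0
        · exact Or.inl (by rw [hx0]; rfl)
        · exact Or.inr ((hβmem _).mpr ⟨x, rfl, hx0, hfx⟩)
      have hcnt : α.countP (fun a => decide (a < ((f x : Fin (m+1)) : ℕ))) = 0 := by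
        rw [hfx]
        simp
      rw [hcnt, hfx]
      simp
    · have hx0 : x ≠ 0 := fun h => hfx (by rw [h]; exact hqm.1)
      have hxv0 : (x:ℕ) ≠ 0 := fun h => hx0 (Fin.ext h)
      have hxnm : (x:ℕ) ∉ β := by
        intro hmem
        obtain ⟨x', hx', hx'0, hx'f⟩ := (hβmem _).mp hmem
        have hxx : x' = x := Fin.ext hx'
        rw [hxx] at hx'f
        exact hfx hx'f
      rw [if_neg (by push_neg; exact ⟨hxv0, hxnm⟩)]
      -- counts as finset cards
      have hcβ : β.countP (fun a => decide (a < (x:ℕ))) =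
          (Finset.univ.filter (fun x' : Fin (n+1) => (x' ≠ 0 ∧ f x' = 0) ∧ (x':ℕ) < (x:ℕ))).card := by
        rw [hβ]; exact countP_map_filter _ _
      have hcα : α.countP (fun a => decide (a < ((f x : Fin (m+1)) : ℕ))) =
          (Finset.univ.filter (fun y : Fin (m+1) =>
            (y ≠ 0 ∧ ∀ x', f x' ≠ y) ∧ (y:ℕ) < ((f x : Fin (m+1)) : ℕ))).card := by
        rw [hα]; exact countP_map_filter _ _
      set Rx : Finset (Fin (n+1)) :=
        Finset.univ.filter (fun x' => (x' ≠ 0 ∧ ¬ f x' = 0) ∧ (x':ℕ) ≤ (x:ℕ)) with hRx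
      set Ry : Finset (Fin (m+1)) :=
        Finset.univ.filter (fun y => (y ≠ 0 ∧ ∃ x', f x' = y) ∧ (y:ℕ) ≤ ((f x : Fin (m+1)) : ℕ)) with hRy
      -- claim 1
      have hclaim1 : β.countP (fun a => decide (a < (x:ℕ))) + Rx.card = (x:ℕ) := by
        have hsplit := Finset.card_filter_add_card_filter_not
          (s := Finset.univ.filter (fun x' : Fin (n+1) => x' ≠ 0 ∧ (x':ℕ) ≤ (x:ℕ)))
          (p := fun x' => f x' = 0)
        rw [Finset.filter_filter, Finset.filter_filter] at hsplit
        have hbase : (Finset.univ.filter (fun x' : Fin (n+1) => x' ≠ 0 ∧ (x':ℕ) ≤ (x:ℕ))).card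
            = (x:ℕ) := by
          have heq : Finset.univ.filter (fun x' : Fin (n+1) => x' ≠ 0 ∧ (x':ℕ) ≤ (x:ℕ))
              = Finset.univ.filter (fun x' : Fin (n+1) => (x':ℕ) ≠ 0 ∧ (x':ℕ) ≤ (x:ℕ)) :=
            Finset.filter_congr (by intro a _; simp only [ne_eq, Fin.ext_iff, Fin.val_zero])
          rw [heq]
          exact card_val_le (by omega)
        have he1 : Finset.univ.filter (fun a : Fin (n+1) => (a ≠ 0 ∧ (a:ℕ) ≤ (x:ℕ)) ∧ f a = 0)
            = Finset.univ.filter (fun x' : Fin (n+1) => (x' ≠ 0 ∧ f x' = 0) ∧ (x':ℕ) < (x:ℕ)) := by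
          apply Finset.filter_congr
          intro a _
          constructor
          · rintro ⟨⟨h1, h2⟩, h3⟩
            refine ⟨⟨h1, h3⟩, ?_⟩
            rcases Nat.lt_or_ge (a:ℕ) (x:ℕ) with h | h
            · exact h
            · exfalso
              have : a = x := Fin.ext (by omega)
              rw [this] at h3
              exact hfx h3
          · rintro ⟨⟨h1, h2⟩, h3⟩
            exact ⟨⟨h1, by omega⟩, h2⟩
        have he2 : Finset.univ.filter (fun a : Fin (n+1) => (a ≠ 0 ∧ (a:ℕ) ≤ (x:ℕ)) ∧ ¬ f a = 0)
            = Rx := by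
          rw [hRx]
          apply Finset.filter_congr
          intro a _
          constructor
          · rintro ⟨⟨h1, h2⟩, h3⟩; exact ⟨⟨h1, h3⟩, h2⟩
          · rintro ⟨⟨h1, h2⟩, h3⟩; exact ⟨⟨h1, h3⟩, h2⟩
        rw [he1, he2, hbase] at hsplit
        rw [hcβ]
        exact hsplit
      -- claim 2
      have hclaim2 : α.countP (fun a => decide (a < ((f x : Fin (m+1)) : ℕ))) + Ry.card
          = ((f x : Fin (m+1)) : ℕ) := by
        have hsplit := Finset.card_filter_add_card_filter_not
          (s := Finset.univ.filter (fun y : Fin (m+1) => y ≠ 0 ∧ (y:ℕ) ≤ ((f x : Fin (m+1)) : ℕ)))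
          (p := fun y => ∀ x', f x' ≠ y)
        rw [Finset.filter_filter, Finset.filter_filter] at hsplit
        have hbase : (Finset.univ.filter
            (fun y : Fin (m+1) => y ≠ 0 ∧ (y:ℕ) ≤ ((f x : Fin (m+1)) : ℕ))).card
            = ((f x : Fin (m+1)) : ℕ) := by
          have heq : Finset.univ.filter
              (fun y : Fin (m+1) => y ≠ 0 ∧ (y:ℕ) ≤ ((f x : Fin (m+1)) : ℕ))
              = Finset.univ.filter
              (fun y : Fin (m+1) => (y:ℕ) ≠ 0 ∧ (y:ℕ) ≤ ((f x : Fin (m+1)) : ℕ)) :=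
            Finset.filter_congr (by intro a _; simp only [ne_eq, Fin.ext_iff, Fin.val_zero])
          rw [heq]
          exact card_val_le (by omega)
        have he1 : Finset.univ.filter
            (fun y : Fin (m+1) => (y ≠ 0 ∧ (y:ℕ) ≤ ((f x : Fin (m+1)) : ℕ)) ∧ ∀ x', f x' ≠ y)
            = Finset.univ.filter (fun y : Fin (m+1) =>
              (y ≠ 0 ∧ ∀ x', f x' ≠ y) ∧ (y:ℕ) < ((f x : Fin (m+1)) : ℕ)) := by
          apply Finset.filter_congr
          intro y _
          constructor
          · rintro ⟨⟨h1, h2⟩, h3⟩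
            refine ⟨⟨h1, h3⟩, ?_⟩
            rcases Nat.lt_or_ge (y:ℕ) ((f x : Fin (m+1)) : ℕ) with h | h
            · exact h
            · exfalso
              exact h3 x (Fin.ext (by omega)).symm
          · rintro ⟨⟨h1, h2⟩, h3⟩
            exact ⟨⟨h1, by omega⟩, h2⟩
        have he2 : Finset.univ.filter
            (fun y : Fin (m+1) => (y ≠ 0 ∧ (y:ℕ) ≤ ((f x : Fin (m+1)) : ℕ)) ∧ ¬ ∀ x', f x' ≠ y)
            = Ry := by
          rw [hRy]
          apply Finset.filter_congr
          intro y _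
          push_neg
          constructor
          · rintro ⟨⟨h1, h2⟩, h3⟩; exact ⟨⟨h1, h3⟩, h2⟩
          · rintro ⟨⟨h1, h2⟩, h3⟩; exact ⟨⟨h1, h3⟩, h2⟩
        rw [he1, he2, hbase] at hsplit
        rw [hcα]
        exact hsplit
      -- claim 3 : the bijection
      have hclaim3 : Rx.card = Ry.card := by
        apply Finset.card_nbij (i := f)
        · intro a ha
          rw [Finset.mem_coe, hRx, Finset.mem_filter] at ha
          rw [Finset.mem_coe, hRy, Finset.mem_filter]
          obtain ⟨-, ⟨ha0, haf⟩, hale⟩ := ha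
          refine ⟨Finset.mem_univ _, ⟨haf, a, rfl⟩, ?_⟩
          rcases Nat.lt_or_ge (a:ℕ) (x:ℕ) with h | h
          · exact le_of_lt (hqm.2 a x h haf hfx)
          · have : a = x := Fin.ext (by omega)
            rw [this]
        · intro a ha b hb hab
          simp only [hRx, Finset.coe_filter, Set.mem_setOf_eq] at ha hb
          exact hinj a b ha.2.1.2 hb.2.1.2 hab
        · intro y hy
          simp only [hRy, Finset.coe_filter, Set.mem_setOf_eq, Finset.mem_univ, true_and] at hy
          obtain ⟨⟨hy0, x', hx'⟩, hyle⟩ := hy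
          have hx'f : f x' ≠ 0 := by rw [hx']; exact hy0
          have hx'0 : x' ≠ 0 := fun h => hx'f (by rw [h]; exact hqm.1)
          refine ⟨x', ?_, hx'⟩
          simp only [hRx, Finset.coe_filter, Set.mem_setOf_eq, Finset.mem_univ, true_and]
          refine ⟨⟨hx'0, hx'f⟩, ?_⟩
          rcases Nat.lt_or_ge (x:ℕ) (x':ℕ) with h | h
          · exfalso
            have := hqm.2 x x' h hfx hx'f
            rw [hx'] at this
            rw [Fin.lt_def] at this
            omega
          · exact h
      omega
  · rintro ⟨j, hjn, hjm, β, α, hβl, hαl, ⟨hβc, hβb⟩, ⟨hαc, hαb⟩, hβk, hαk, hfx⟩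
    have hβpw := List.isChain_iff_pairwise.mp hβc
    have hαpw := List.isChain_iff_pairwise.mp hαc
    have hcast : n - β.length + 1 = m - α.length + 1 := by omega
    have hg : QuasiMonotonic
        (fun k : Fin (n - β.length + 1) => dComp m α hαl (Fin.cast hcast k)) := by
      constructor
      · exact dComp_zero m α hαpw hαb hαl _ (by simp)
      · intro p q hpq _ _
        apply dComp_strictMono
        rw [Fin.lt_def] at hpq ⊢
        simpa using hpq
    have := quasiMonotonic_comp hg (uComp_quasiMonotonic n β hβpw hβb hβl)
    have hfeq : f = fun x =>
        (fun k : Fin (n - β.length + 1) => dComp m α hαl (Fin.cast hcast k)) (uComp n β hβl x) := by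
      funext x
      rw [hfx x]
    rw [hfeq]
    exact this
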